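/- Let P(z) be a Laurent polynomial with real coefficients, symmetric under z ↦ 1/z, with no roots on the unit circle, with roots z_1, 1/z_1, ..., z_s, 1/z_s where |z_j| > 1, and leading coefficient -η·z^s appearing as P(z) = η·z^{-s}∏_j(z_j - z)(1/z_j - z) up to sign. Define f(n) = η^n ∏_{j=1}^s |2·T_n(w_j) - 2| with w_j = (1/2)(z_j + z_j^{-1}). Then f(n) ~ A^n as n → ∞, where A = η·∏_{j=1}^s |z_j| is the Mahler measure of P. -/

import Mathlib

open Polynomial Filter

lemma T_eval_half (z : ℂ) (hz : z ≠ 0) (n : ℤ) :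
    (Polynomial.Chebyshev.T ℂ n).eval ((1 / 2 : ℂ) * (z + z⁻¹)) = (z ^ n + z ^ (-n)) / 2 := by
  obtain ⟨θ, hθ⟩ : ∃ θ : ℂ, Complex.exp θ = z := ⟨Complex.log z, Complex.exp_log hz⟩
  have hI : ∀ w : ℂ, -(w * Complex.I) * Complex.I = w := by
    intro w
    calc -(w * Complex.I) * Complex.I = -(w * (Complex.I*Complex.I)) := by ring
    _ = w := by rw [Complex.I_mul_I]; ring
  have h1 : (1 / 2 : ℂ) * (z + z⁻¹) = Complex.cos (-(θ * Complex.I)) := by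
    rw [Complex.cos, ← hθ, ← Complex.exp_neg]
    rw [hI θ]
    have : -(-(θ * Complex.I)) * Complex.I = -θ := by
      have := hI θ; calc -(-(θ * Complex.I)) * Complex.I = -(-(θ * Complex.I) * Complex.I) := by ring
      _ = -θ := by rw [hI]
    rw [this]; ring
  rw [h1, Polynomial.Chebyshev.T_complex_cos, Complex.cos]
  have h2 : (n : ℂ) * -(θ * Complex.I) * Complex.I = n * θ := by
    calc (n : ℂ) * -(θ * Complex.I) * Complex.I = n * (-(θ * Complex.I) * Complex.I) := by ring
    _ = n * θ := by rw [hI]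
  have h3 : -((n : ℂ) * -(θ * Complex.I)) * Complex.I = -(n * θ) := by
    calc -((n : ℂ) * -(θ * Complex.I)) * Complex.I = -((n:ℂ) * -(θ * Complex.I) * Complex.I) := by ring
    _ = _ := by rw [h2]
  rw [h2, h3, ← hθ, ← Complex.exp_int_mul, ← Complex.exp_int_mul]
  rw [show (-(↑n * θ)) = ((-n : ℤ) : ℂ) * θ by push_cast; ring]

/-- Let `z_1, …, z_s` be complex numbers with `|z_j| > 1` (the roots outside the
unit circle of a palindromic real Laurent polynomial with no roots on the unit
circle and leading coefficient of absolute value `η > 0`).  Setting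
`w_j = (z_j + z_j⁻¹)/2` and `f(n) = ηⁿ ∏_j |2 T_n(w_j) - 2|`, one has
`f(n) ~ Aⁿ` as `n → ∞`, where `A = η ∏_j |z_j|` is the Mahler measure. -/
theorem forest_asymptotics {s : ℕ} (η : ℝ) (hη : 0 < η)
    (z : Fin s → ℂ) (hz : ∀ j, 1 < ‖z j‖)
    (f : ℕ → ℝ)
    (hf : ∀ n, f n = η ^ n * ∏ j : Fin s,
      ‖2 * (Polynomial.Chebyshev.T ℂ n).eval ((1 / 2 : ℂ) * (z j + (z j)⁻¹)) - 2‖)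
    (A : ℝ) (hA : A = η * ∏ j : Fin s, ‖z j‖) :
    Tendsto (fun n : ℕ => f n / A ^ n) atTop (nhds 1) := by
  have hz0 : ∀ j, z j ≠ 0 := by
    intro j h
    have := hz j
    rw [h] at this
    simp at this
    linarith
  have key : ∀ n : ℕ, f n / A ^ n = ‖∏ j : Fin s, (1 - (z j)⁻¹ ^ n) ^ 2‖ := by
    intro n
    have hT : ∀ j, (2 : ℂ) * (Polynomial.Chebyshev.T ℂ n).eval ((1 / 2 : ℂ) * (z j + (z j)⁻¹)) - 2
        = z j ^ n * (1 - (z j)⁻¹ ^ n) ^ 2 := by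
      intro j
      rw [T_eval_half (z j) (hz0 j) n, zpow_natCast, zpow_neg, zpow_natCast, ← inv_pow]
      have hzn : z j ^ n ≠ 0 := pow_ne_zero _ (hz0 j)
      have hinv : z j ^ n * (z j)⁻¹ ^ n = 1 := by rw [← mul_pow, mul_inv_cancel₀ (hz0 j), one_pow]
      field_simp
      linear_combination (2 - (z j)⁻¹ ^ n) * hinv
    have hane : (η : ℝ) ^ n ≠ 0 := pow_ne_zero _ (ne_of_gt hη)
    have hPne : (∏ j : Fin s, ‖z j‖ ^ n) ≠ 0 :=
      Finset.prod_ne_zero_iff.2 fun j _ => pow_ne_zero _ (norm_ne_zero_iff.mpr (hz0 j))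
    rw [hf n, hA, mul_pow, ← Finset.prod_pow]
    have hprod : (∏ j : Fin s, ‖
        2 * (Polynomial.Chebyshev.T ℂ n).eval ((1 / 2 : ℂ) * (z j + (z j)⁻¹)) - 2‖)
        = (∏ j : Fin s, ‖z j‖ ^ n) *
          ∏ j : Fin s, ‖(1 - (z j)⁻¹ ^ n) ^ 2‖ := by
      rw [← Finset.prod_mul_distrib]
      exact Finset.prod_congr rfl fun j _ => by rw [hT j, norm_mul, norm_pow]
    rw [hprod, norm_prod]
    field_simp
  have h0 : ∀ j : Fin s, Tendsto (fun n : ℕ => (z j)⁻¹ ^ n) atTop (nhds 0) := by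
    intro j
    apply tendsto_pow_atTop_nhds_zero_of_norm_lt_one
    rw [norm_inv]
    exact inv_lt_one_of_one_lt₀ (hz j)
  have hg : Tendsto (fun n : ℕ => ∏ j : Fin s, (1 - (z j)⁻¹ ^ n) ^ 2) atTop (nhds 1) := by
    have : Tendsto (fun n : ℕ => ∏ j : Fin s, (1 - (z j)⁻¹ ^ n) ^ 2) atTop
        (nhds (∏ j : Fin s, (1 - (0:ℂ)) ^ 2)) :=
      tendsto_finset_prod _ fun j _ => ((tendsto_const_nhds.sub (h0 j)).pow 2)
    simpa using this
  have final := (continuous_norm.tendsto 1).comp hg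
  rw [norm_one] at final
  exact final.congr fun n => by rw [Function.comp_apply, ← key n]
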